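/- For H = [[A, B], [B*, C]] positive semidefinite Hermitian of maximal rank, the null space of the generalized Schur complement H/A = C − B* A⁺ B equals the null space of C. -/

import Mathlib

open Matrix ComplexOrder

/-- \`Ap\` satisfies the four Penrose equations for \`A\`, i.e. it is the Moore-Penrose
inverse of \`A\`. -/
def IsMoorePenrose {m n : Type*} [Fintype m] [Fintype n]
    (A : Matrix m n ℂ) (Ap : Matrix n m ℂ) : Prop :=
  A * Ap * A = A ∧ Ap * A * Ap = Ap ∧ (A * Ap)ᴴ = A * Ap ∧ (Ap * A)ᴴ = Ap * A

/-- Uniqueness of the Moore-Penrose inverse. -/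
lemma moorePenrose_unique {n : Type*} [Fintype n] [DecidableEq n]
    (A X Y : Matrix n n ℂ) (hX : IsMoorePenrose A X) (hY : IsMoorePenrose A Y) :
    X = Y := by
  obtain ⟨hX1, hX2, hX3, hX4⟩ := hX
  obtain ⟨hY1, hY2, hY3, hY4⟩ := hY
  have hAX : A * X = A * Y := by
    calc A * X = (A * X)ᴴ := hX3.symm
    _ = ((A * Y * A) * X)ᴴ := by rw [hY1]
    _ = ((A * Y) * (A * X))ᴴ := by simp only [mul_assoc]
    _ = (A * X)ᴴ * (A * Y)ᴴ := by rw [conjTranspose_mul]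
    _ = (A * X) * (A * Y) := by rw [hX3, hY3]
    _ = (A * X * A) * Y := by simp only [mul_assoc]
    _ = A * Y := by rw [hX1]
  have hXA : X * A = Y * A := by
    calc X * A = (X * A)ᴴ := hX4.symm
    _ = (X * (A * Y * A))ᴴ := by rw [hY1]
    _ = ((X * A) * (Y * A))ᴴ := by simp only [mul_assoc]
    _ = (Y * A)ᴴ * (X * A)ᴴ := by rw [conjTranspose_mul]
    _ = (Y * A) * (X * A) := by rw [hX4, hY4]
    _ = Y * (A * X * A) := by simp only [mul_assoc]
    _ = Y * A := by rw [hX1]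
  calc X = X * A * X := hX2.symm
  _ = X * (A * Y) := by rw [mul_assoc, hAX]
  _ = (Y * A) * Y := by rw [← mul_assoc, hXA]
  _ = Y := hY2

/-- The Moore-Penrose inverse of a Hermitian matrix is Hermitian. -/
lemma moorePenrose_conjTranspose {n : Type*} [Fintype n] [DecidableEq n]
    {A Ap : Matrix n n ℂ} (hA : Aᴴ = A) (hAp : IsMoorePenrose A Ap) : Apᴴ = Ap := by
  obtain ⟨h1, h2, h3, h4⟩ := hAp
  refine moorePenrose_unique A Apᴴ Ap ⟨?_, ?_, ?_, ?_⟩ ⟨h1, h2, h3, h4⟩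
  · calc A * Apᴴ * A = (Aᴴ * (Ap * Aᴴ))ᴴ := by
          simp only [conjTranspose_mul, conjTranspose_conjTranspose, mul_assoc]
    _ = (A * Ap * A)ᴴ := by rw [hA, mul_assoc]
    _ = A := by rw [h1, hA]
  · calc Apᴴ * A * Apᴴ = (Ap * (Aᴴ * Ap))ᴴ := by
          simp only [conjTranspose_mul, conjTranspose_conjTranspose, mul_assoc]
    _ = (Ap * A * Ap)ᴴ := by rw [hA, mul_assoc]
    _ = Apᴴ := by rw [h2]
  · calc (A * Apᴴ)ᴴ = Ap * Aᴴ := by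
          simp only [conjTranspose_mul, conjTranspose_conjTranspose]
    _ = Ap * A := by rw [hA]
    _ = (Ap * A)ᴴ := h4.symm
    _ = Aᴴ * Apᴴ := by rw [conjTranspose_mul]
    _ = A * Apᴴ := by rw [hA]
  · calc (Apᴴ * A)ᴴ = Aᴴ * Ap := by
          simp only [conjTranspose_mul, conjTranspose_conjTranspose]
    _ = A * Ap := by rw [hA]
    _ = (A * Ap)ᴴ := h3.symm
    _ = Apᴴ * Aᴴ := by rw [conjTranspose_mul]
    _ = Apᴴ * A := by rw [hA]

/-- Rank of a sum of matrices is at most the sum of the ranks. -/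
lemma matrix_rank_add_le {m n : Type*} [Fintype m] [Fintype n]
    (M N : Matrix m n ℂ) : (M + N).rank ≤ M.rank + N.rank := by
  have hr : LinearMap.range (M + N).mulVecLin ≤
      LinearMap.range M.mulVecLin ⊔ LinearMap.range N.mulVecLin := by
    rintro _ ⟨x, rfl⟩
    rw [Matrix.mulVecLin_add]
    exact Submodule.add_mem_sup ⟨x, rfl⟩ ⟨x, rfl⟩
  calc (M + N).rank
      ≤ Module.finrank ℂ ↥(LinearMap.range M.mulVecLin ⊔ LinearMap.range N.mulVecLin) :=
        Submodule.finrank_mono hr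
    _ ≤ M.rank + N.rank := Submodule.finrank_add_le_finrank_add_finrank _ _

theorem ker_schurComplement_eq_ker {k l : ℕ}
    (A : Matrix (Fin k) (Fin k) ℂ) (B : Matrix (Fin k) (Fin l) ℂ)
    (C : Matrix (Fin l) (Fin l) ℂ) (Ap : Matrix (Fin k) (Fin k) ℂ)
    (hAp : IsMoorePenrose A Ap)
    (hH : (Matrix.fromBlocks A B Bᴴ C).PosSemidef)
    (hrank : (Matrix.fromBlocks A B Bᴴ C).rank = A.rank + C.rank) :
    LinearMap.ker (C - Bᴴ * Ap * B).mulVecLin = LinearMap.ker C.mulVecLin := by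
  obtain ⟨hAp1, hAp2, hAp3, hAp4⟩ := hAp
  -- decompose H = Nᴴ * N
  obtain ⟨N, hN⟩ : ∃ N : Matrix (Fin k ⊕ Fin l) (Fin k ⊕ Fin l) ℂ,
      fromBlocks A B Bᴴ C = Nᴴ * N := by
    classical
    open MatrixOrder in
    obtain ⟨X, hX, -, hXX⟩ :=
      CFC.exists_sqrt_of_isSelfAdjoint_of_quasispectrumRestricts hH.isHermitian
        (QuasispectrumRestricts.nnreal_of_nonneg hH.nonneg)
    exact ⟨X, by rw [← star_eq_conjTranspose, hX.star_eq]; simpa using hXX.symm⟩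
  set N₁ := N.toCols₁ with hN₁
  set N₂ := N.toCols₂ with hN₂
  have hNsplit : N = fromCols N₁ N₂ := (fromCols_toCols N).symm
  have hNH : Nᴴ = fromRows N₁ᴴ N₂ᴴ := by
    rw [hNsplit]; ext (i | i) j <;> rfl
  have hblocks : fromBlocks A B Bᴴ C =
      fromBlocks (N₁ᴴ * N₁) (N₁ᴴ * N₂) (N₂ᴴ * N₁) (N₂ᴴ * N₂) := by
    rw [hN, hNH]
    conv_lhs => rw [hNsplit]
    rw [fromRows_mul_fromCols]
  have hA : A = N₁ᴴ * N₁ := congrArg Matrix.toBlocks₁₁ hblocks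
  have hB : B = N₁ᴴ * N₂ := congrArg Matrix.toBlocks₁₂ hblocks
  have hBH : Bᴴ = N₂ᴴ * N₁ := congrArg Matrix.toBlocks₂₁ hblocks
  have hC : C = N₂ᴴ * N₂ := congrArg Matrix.toBlocks₂₂ hblocks
  have hAherm : Aᴴ = A := by rw [hA, conjTranspose_mul, conjTranspose_conjTranspose]
  have hApherm : Apᴴ = Ap :=
    moorePenrose_conjTranspose hAherm ⟨hAp1, hAp2, hAp3, hAp4⟩
  -- kernel of A is contained in kernel of N₁
  have hkerA : ∀ x, A *ᵥ x = 0 → N₁ *ᵥ x = 0 := by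
    intro x hx
    have : star (N₁ *ᵥ x) ⬝ᵥ (N₁ *ᵥ x) = 0 := by
      rw [star_mulVec, ← dotProduct_mulVec, mulVec_mulVec, ← hA, hx, dotProduct_zero]
    exact dotProduct_star_self_eq_zero.mp this
  -- N₁ * Ap * A = N₁
  have hN₁ApA : N₁ * (Ap * A) = N₁ := by
    have hz : ∀ v, (N₁ * (Ap * A)) *ᵥ v = N₁ *ᵥ v := by
      intro v
      have hx : A *ᵥ ((Ap * A) *ᵥ v - v) = 0 := by
        rw [mulVec_sub, mulVec_mulVec, ← Matrix.mul_assoc, hAp1, sub_self]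
      have h0 := hkerA _ hx
      rw [mulVec_sub, sub_eq_zero] at h0
      rw [← mulVec_mulVec]
      exact h0
    ext i j
    rw [← sub_eq_zero]
    have h1 := congrFun (hz (Pi.single j 1)) i
    rw [mulVec_single, mulVec_single] at h1
    simpa [sub_eq_zero] using h1
  -- A * Ap * B = B and Bᴴ * Ap * A = Bᴴ
  have hBAA : Bᴴ * (Ap * A) = Bᴴ := by
    rw [hBH, Matrix.mul_assoc, hN₁ApA]
  have hAAB : A * Ap * B = B := by
    have := congrArg conjTranspose hBAA
    simpa [conjTranspose_mul, conjTranspose_conjTranspose, hApherm, hAherm,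
      Matrix.mul_assoc] using this
  set Q : Matrix (Fin k) (Fin l) ℂ := Ap * B with hQ
  set S : Matrix (Fin l) (Fin l) ℂ := C - Bᴴ * Ap * B with hSdef
  set R : Matrix (Fin k ⊕ Fin l) (Fin l) ℂ := N₂ - N₁ * Q with hR
  have hQH : Qᴴ = Bᴴ * Ap := by rw [hQ, conjTranspose_mul, hApherm]
  have hQAQ : Qᴴ * (A * Q) = Bᴴ * Ap * B := by
    rw [hQH, hQ]
    calc Bᴴ * Ap * (A * (Ap * B)) = Bᴴ * ((Ap * A * Ap) * B) := by simp only [Matrix.mul_assoc]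
    _ = Bᴴ * (Ap * B) := by rw [hAp2]
    _ = Bᴴ * Ap * B := by rw [Matrix.mul_assoc]
  have e1 : N₂ᴴ * (N₁ * Q) = Bᴴ * Ap * B := by
    rw [hQ, hBH]; simp only [Matrix.mul_assoc]
  have e2 : Qᴴ * N₁ᴴ * N₂ = Bᴴ * Ap * B := by
    rw [hQH]; simp only [Matrix.mul_assoc]; rw [← hB]
  have e3 : Qᴴ * N₁ᴴ * (N₁ * Q) = Bᴴ * Ap * B := by
    rw [Matrix.mul_assoc Qᴴ, ← Matrix.mul_assoc N₁ᴴ N₁ Q, ← hA, hQAQ]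
  have hS : S = Rᴴ * R := by
    have h : Rᴴ * R = C - Bᴴ * Ap * B := by
      rw [hR, conjTranspose_sub, conjTranspose_mul, Matrix.sub_mul, Matrix.mul_sub, Matrix.mul_sub,
        ← hC, e1, e2, e3]
      abel
    rw [hSdef, h]
  -- kernels via the factorizations
  have kerS : ∀ x, S *ᵥ x = 0 ↔ R *ᵥ x = 0 := by
    intro x
    constructor
    · intro hx
      have : star (R *ᵥ x) ⬝ᵥ (R *ᵥ x) = 0 := by
        rw [star_mulVec, ← dotProduct_mulVec, mulVec_mulVec, ← hS, hx, dotProduct_zero]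
      exact dotProduct_star_self_eq_zero.mp this
    · intro hx
      rw [hS, ← mulVec_mulVec, hx, mulVec_zero]
  have kerC : ∀ x, C *ᵥ x = 0 ↔ N₂ *ᵥ x = 0 := by
    intro x
    constructor
    · intro hx
      have : star (N₂ *ᵥ x) ⬝ᵥ (N₂ *ᵥ x) = 0 := by
        rw [star_mulVec, ← dotProduct_mulVec, mulVec_mulVec, ← hC, hx, dotProduct_zero]
      exact dotProduct_star_self_eq_zero.mp this
    · intro hx
      rw [hC, ← mulVec_mulVec, hx, mulVec_zero]
  -- inclusion ker C ⊆ ker S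
  have hincl : LinearMap.ker C.mulVecLin ≤ LinearMap.ker S.mulVecLin := by
    intro x hx
    rw [LinearMap.mem_ker, mulVecLin_apply] at hx ⊢
    have hN₂x : N₂ *ᵥ x = 0 := (kerC x).mp hx
    have hBx : B *ᵥ x = 0 := by rw [hB, ← mulVec_mulVec, hN₂x, mulVec_zero]
    refine (kerS x).mpr ?_
    rw [hR, sub_mulVec, hN₂x, ← mulVec_mulVec, hQ, ← mulVec_mulVec, hBx,
      mulVec_zero, mulVec_zero, sub_self]
  -- congruence: H = Uᴴ * (D * U)
  set U : Matrix (Fin k ⊕ Fin l) (Fin k ⊕ Fin l) ℂ := fromBlocks 1 Q 0 1 with hU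
  set D : Matrix (Fin k ⊕ Fin l) (Fin k ⊕ Fin l) ℂ := fromBlocks A 0 0 S with hD
  have hAQ : A * Q = B := by rw [hQ, ← Matrix.mul_assoc, hAAB]
  have hQA : Qᴴ * A = Bᴴ := by rw [hQH, Matrix.mul_assoc, hBAA]
  have hDU : D * U = fromBlocks A B 0 S := by
    rw [hD, hU, fromBlocks_multiply]
    simp [hAQ]
  have hCS : Qᴴ * B + S = C := by
    rw [hQH, hSdef]; abel
  have hcong : fromBlocks A B Bᴴ C = Uᴴ * (D * U) := by
    rw [hDU, hU, fromBlocks_conjTranspose, fromBlocks_multiply]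
    simp only [conjTranspose_one, conjTranspose_zero, Matrix.one_mul, Matrix.zero_mul,
      Matrix.mul_zero, Matrix.mul_one, add_zero, zero_add]
    rw [hQA, hCS]
  -- rank comparison
  have hrankH : (fromBlocks A B Bᴴ C).rank = D.rank := by
    rw [hcong, Matrix.rank_mul_eq_right_of_isUnit_det, Matrix.rank_mul_eq_left_of_isUnit_det]
    · rw [det_fromBlocks_zero₂₁]; simp
    · rw [fromBlocks_conjTranspose]; simp only [conjTranspose_zero, conjTranspose_one]
      rw [det_fromBlocks_zero₁₂]; simp
  have hDle : D.rank ≤ A.rank + S.rank := by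
    have hsplit : D = fromBlocks A 0 0 0 + fromBlocks 0 0 0 S := by
      rw [hD, fromBlocks_add]; simp
    have h1 : (fromBlocks A 0 (0 : Matrix (Fin l) (Fin k) ℂ)
        (0 : Matrix (Fin l) (Fin l) ℂ)).rank ≤ A.rank := by
      have hfac : fromBlocks A 0 (0 : Matrix (Fin l) (Fin k) ℂ) (0 : Matrix (Fin l) (Fin l) ℂ)
          = fromRows (1 : Matrix (Fin k) (Fin k) ℂ) (0 : Matrix (Fin l) (Fin k) ℂ) *
            (A * fromCols (1 : Matrix (Fin k) (Fin k) ℂ) (0 : Matrix (Fin k) (Fin l) ℂ)) := by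
        ext (i | i) (j | j) <;>
          simp [Matrix.mul_apply, Matrix.one_apply]
      rw [hfac]
      exact (rank_mul_le_right _ _).trans (rank_mul_le_left _ _)
    have h2 : (fromBlocks (0 : Matrix (Fin k) (Fin k) ℂ) 0 (0 : Matrix (Fin l) (Fin k) ℂ)
        S).rank ≤ S.rank := by
      have hfac : fromBlocks (0 : Matrix (Fin k) (Fin k) ℂ) 0 (0 : Matrix (Fin l) (Fin k) ℂ) S
          = fromRows (0 : Matrix (Fin k) (Fin l) ℂ) (1 : Matrix (Fin l) (Fin l) ℂ) *
            (S * fromCols (0 : Matrix (Fin l) (Fin k) ℂ) (1 : Matrix (Fin l) (Fin l) ℂ)) := by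
        ext (i | i) (j | j) <;>
          simp [Matrix.mul_apply, Matrix.one_apply]
      rw [hfac]
      exact (rank_mul_le_right _ _).trans (rank_mul_le_left _ _)
    calc D.rank ≤ (fromBlocks A 0 0 0).rank + (fromBlocks 0 0 0 S).rank := by
          rw [hsplit]; exact matrix_rank_add_le _ _
    _ ≤ A.rank + S.rank := Nat.add_le_add h1 h2
  have hrankCS : C.rank ≤ S.rank := by
    have h : A.rank + C.rank ≤ A.rank + S.rank := by
      rw [← hrank, hrankH]; exact hDle
    omega
  -- finrank comparison via rank-nullity
  have hrn1 : S.rank + Module.finrank ℂ ↥(LinearMap.ker S.mulVecLin) = l := by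
    have h := LinearMap.finrank_range_add_finrank_ker S.mulVecLin
    rw [Module.finrank_pi] at h
    simpa [Matrix.rank] using h
  have hrn2 : C.rank + Module.finrank ℂ ↥(LinearMap.ker C.mulVecLin) = l := by
    have h := LinearMap.finrank_range_add_finrank_ker C.mulVecLin
    rw [Module.finrank_pi] at h
    simpa [Matrix.rank] using h
  have hfr : Module.finrank ℂ ↥(LinearMap.ker S.mulVecLin)
      ≤ Module.finrank ℂ ↥(LinearMap.ker C.mulVecLin) := by omega
  exact (Submodule.eq_of_le_of_finrank_le hincl hfr).symm
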